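/- Let G be a finite simple graph with minimum degree δ ≥ 1, and let α > 0 be real. Then SDD_α(G) ≤ δ^{-2α} M1^{2α+1}(G). -/

import Mathlib

open Real Finset

noncomputable def SDD {V : Type*} [Fintype V] (G : SimpleGraph V) [DecidableRel G.Adj]
    (α : ℝ) : ℝ :=
  ∑ e ∈ G.edgeFinset, Sym2.lift
    ⟨fun u v => (G.degree u : ℝ) ^ α / (G.degree v : ℝ) ^ α +
                (G.degree v : ℝ) ^ α / (G.degree u : ℝ) ^ α,
     fun u v => by ring⟩ e

noncomputable def M1 {V : Type*} [Fintype V] (G : SimpleGraph V) [DecidableRel G.Adj]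
    (α : ℝ) : ℝ :=
  ∑ u : V, (G.degree u : ℝ) ^ α

lemma edge_sum_eq {V : Type*} [Fintype V] (G : SimpleGraph V) [DecidableRel G.Adj]
    (f : V → ℝ) :
    ∑ e ∈ G.edgeFinset, Sym2.lift ⟨fun u v => f u + f v, fun u v => by ring⟩ e
      = ∑ v : V, (G.degree v : ℝ) * f v := by
  classical
  have hdart : ∑ d : G.Dart, f d.fst
      = ∑ e ∈ G.edgeFinset, Sym2.lift ⟨fun u v => f u + f v, fun u v => by ring⟩ e := by
    rw [← Finset.sum_fiberwise_of_maps_to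
      (g := SimpleGraph.Dart.edge) (t := G.edgeFinset)
      (fun d _ => by rw [SimpleGraph.mem_edgeFinset]; exact d.edge_mem)]
    refine Finset.sum_congr rfl fun e he => ?_
    rw [SimpleGraph.mem_edgeFinset] at he
    induction e with
    | _ u v =>
      let d : G.Dart := ⟨(u, v), he⟩
      have hfib : ({d' : G.Dart | d'.edge = s(u, v)} : Finset _) = {d, d.symm} :=
        d.edge_fiber
      rw [show Finset.filter (fun d' : G.Dart => d'.edge = s(u, v)) Finset.univ
            = {d, d.symm} from hfib,
        Finset.sum_insert (by simpa using d.symm_ne.symm), Finset.sum_singleton]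
      simp [d, SimpleGraph.Dart.symm]
  have hvert : ∑ d : G.Dart, f d.fst = ∑ v : V, (G.degree v : ℝ) * f v := by
    rw [← Finset.sum_fiberwise_of_maps_to
      (g := fun d : G.Dart => d.fst) (t := Finset.univ) (fun d _ => Finset.mem_univ _)]
    refine Finset.sum_congr rfl fun v _ => ?_
    have hcongr : ∀ d ∈ Finset.filter (fun i : G.Dart => i.fst = v) Finset.univ,
        f d.fst = f v := fun d hd => by rw [(Finset.mem_filter.mp hd).2]
    rw [Finset.sum_congr rfl hcongr, Finset.sum_const, nsmul_eq_mul,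
      G.dart_fst_fiber_card_eq_degree v]
  rw [← hdart, hvert]

theorem sdd_le_m1 {V : Type*} [Fintype V] (G : SimpleGraph V) [DecidableRel G.Adj]
    (hδ : 1 ≤ G.minDegree) {α : ℝ} (hα : 0 < α) :
    SDD G α ≤ (G.minDegree : ℝ) ^ (-(2 * α)) * M1 G (2 * α + 1) := by
  classical
  have hδ0 : (0 : ℝ) < (G.minDegree : ℝ) := by exact_mod_cast hδ
  set δ : ℝ := (G.minDegree : ℝ)
  have hdeg : ∀ v : V, δ ≤ (G.degree v : ℝ) := fun v => by
    exact Nat.cast_le.mpr (G.minDegree_le_degree v)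
  have hdpos : ∀ v : V, (0 : ℝ) < (G.degree v : ℝ) := fun v => lt_of_lt_of_le hδ0 (hdeg v)
  have key : SDD G α ≤ ∑ e ∈ G.edgeFinset, Sym2.lift
      ⟨fun u v => δ ^ (-(2*α)) * (G.degree u : ℝ) ^ (2*α)
          + δ ^ (-(2*α)) * (G.degree v : ℝ) ^ (2*α), fun u v => by ring⟩ e := by
    refine Finset.sum_le_sum fun e _ => ?_
    induction e with
    | _ u v =>
      simp only [Sym2.lift_mk]
      have hb : ∀ a b : V, (G.degree a : ℝ) ^ α / (G.degree b : ℝ) ^ α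
          ≤ δ ^ (-(2*α)) * (G.degree a : ℝ) ^ (2*α) := by
        intro a b
        have hδa : δ ^ (-(2*α)) = (δ ^ (2*α))⁻¹ := Real.rpow_neg hδ0.le _
        rw [hδa, inv_mul_eq_div, div_le_div_iff₀ (Real.rpow_pos_of_pos (hdpos b) α)
          (Real.rpow_pos_of_pos hδ0 _)]
        have h1 : δ ^ (2*α) = δ ^ α * δ ^ α := by
          rw [← Real.rpow_add hδ0]; ring_nf
        have h2 : (G.degree a : ℝ) ^ (2*α) = (G.degree a : ℝ) ^ α * (G.degree a : ℝ) ^ α := by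
          rw [← Real.rpow_add (hdpos a)]; ring_nf
        rw [h1, h2, mul_assoc]
        refine mul_le_mul_of_nonneg_left ?_ (Real.rpow_nonneg (hdpos a).le _)
        exact mul_le_mul (Real.rpow_le_rpow hδ0.le (hdeg a) hα.le)
          (Real.rpow_le_rpow hδ0.le (hdeg b) hα.le)
          (Real.rpow_nonneg hδ0.le _) (Real.rpow_nonneg (hdpos a).le _)
      exact add_le_add (hb u v) (hb v u)
  refine key.trans ?_
  rw [edge_sum_eq G (fun u => δ ^ (-(2*α)) * (G.degree u : ℝ) ^ (2*α))]
  rw [M1, Finset.mul_sum]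
  refine le_of_eq (Finset.sum_congr rfl fun v _ => ?_)
  rw [Real.rpow_add (hdpos v), Real.rpow_one]
  ring
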